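/- For all k ≥ 3 and all x_1,…,x_k ∈ H_n, (k-2) · m(x_1,…,x_k) ≤ 2 · ∑_{i=1}^k m(x_1,…,x_{i-1},x_{i+1},…,x_k), where the i-th summand is the inertia of the (k-1)-tuple obtained by deleting x_i. (Equivalently, r̄(x_1,…,x_k) ≤ (2(k-1)/(k(k-2))) ∑_{i=1}^k r̄ of the deleted tuples.) -/
import Mathlib

/-- The inertia of a `k`-tuple of points of `H_n`: `min_y ∑ᵢ d(y, xᵢ)`
(the average radius is the inertia divided by `k`). -/
def inertia {n k : ℕ} (x : Fin k → Fin n → ZMod 2) : ℕ :=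
  Finset.inf' Finset.univ Finset.univ_nonempty
    (fun y : Fin n → ZMod 2 => ∑ i, hammingDist y (x i))

private lemma zmod2_cases (b : ZMod 2) : b = 0 ∨ b = 1 := by revert b; decide

/-- inf over the cube of a sum of per-coordinate functions is the sum of minima. -/
private lemma inf'_sum_pi {n : ℕ} (F : Fin n → ZMod 2 → ℕ) :
    Finset.inf' Finset.univ Finset.univ_nonempty
        (fun y : Fin n → ZMod 2 => ∑ c, F c (y c))
      = ∑ c, min (F c 0) (F c 1) := by
  apply le_antisymm
  · refine le_trans (Finset.inf'_le _
      (Finset.mem_univ (fun c : Fin n => if F c 0 ≤ F c 1 then (0 : ZMod 2) else 1))) ?_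
    apply Finset.sum_le_sum
    intro c _
    by_cases hc : F c 0 ≤ F c 1
    · simp [hc, min_eq_left hc]
    · simp [hc, min_eq_right (le_of_not_ge hc)]
  · rw [Finset.le_inf'_iff]
    intro y _
    apply Finset.sum_le_sum
    intro c _
    rcases zmod2_cases (y c) with h | h <;> rw [h]
    · exact min_le_left _ _
    · exact min_le_right _ _

private lemma inertia_eq {n k : ℕ} (x : Fin k → Fin n → ZMod 2) :
    inertia x = ∑ c, min (∑ i, if (0 : ZMod 2) ≠ x i c then 1 else 0)
        (∑ i, if (1 : ZMod 2) ≠ x i c then 1 else 0) := by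
  have h : ∀ y : Fin n → ZMod 2,
      (∑ i, hammingDist y (x i)) = ∑ c, ∑ i, if y c ≠ x i c then 1 else 0 := by
    intro y
    rw [Finset.sum_comm]
    refine Finset.sum_congr rfl fun i _ => ?_
    rw [hammingDist, Finset.card_filter]
  rw [inertia]
  simp_rw [h]
  exact inf'_sum_pi (fun c b => ∑ i, if b ≠ x i c then 1 else 0)

private lemma key_aux (m A B : ℕ) (hAB : A + B = m + 1) (h : A ≤ B) :
    (m - 1) * min A B ≤ 2 * (A * min (A - 1) B + B * min A (B - 1)) := by
  rcases Nat.eq_zero_or_pos A with h0 | h0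
  · simp [h0]
  obtain ⟨a, rfl⟩ : ∃ a, A = a + 1 := ⟨A - 1, by omega⟩
  rw [min_eq_left h, min_eq_left (by omega : a + 1 - 1 ≤ B)]
  rcases eq_or_lt_of_le h with rfl | h'
  · rw [min_eq_right (by omega : a + 1 - 1 ≤ a + 1)]
    have hm1 : m - 1 = 2 * a := by omega
    rw [hm1]
    simp only [Nat.add_sub_cancel]
    nlinarith
  · rw [min_eq_left (by omega : a + 1 ≤ B - 1)]
    have hm1 : m - 1 ≤ 2 * a + 2 * B := by omega
    calc (m - 1) * (a + 1) ≤ (2 * a + 2 * B) * (a + 1) :=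
          Nat.mul_le_mul_right _ hm1
      _ ≤ 2 * ((a + 1) * (a + 1 - 1) + B * (a + 1)) := by
          simp only [Nat.add_sub_cancel]; nlinarith

private lemma key (m A B : ℕ) (hAB : A + B = m + 1) :
    (m - 1) * min A B ≤ 2 * (A * min (A - 1) B + B * min A (B - 1)) := by
  rcases le_total A B with h | h
  · exact key_aux m A B hAB h
  · have := key_aux m B A (by omega) h
    rw [min_comm B A, min_comm (B - 1) A, min_comm B (A - 1)] at this
    omega

/-- For a `(m+1)`-tuple with `m+1 ≥ 3`:
`(k-2)·m(x) ≤ 2·∑ᵢ m(x with xᵢ deleted)` where `k = m+1`. -/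
theorem inertia_le_two_mul_sum_deleted {n m : ℕ} (hm : 2 ≤ m)
    (x : Fin (m + 1) → Fin n → ZMod 2) :
    (m - 1) * inertia x ≤
      2 * ∑ i : Fin (m + 1), inertia (fun j : Fin m => x (i.succAbove j)) := by
  set u : Fin (m + 1) → Fin n → ℕ :=
    fun i c => if (0 : ZMod 2) ≠ x i c then 1 else 0 with hu
  set v : Fin (m + 1) → Fin n → ℕ :=
    fun i c => if (1 : ZMod 2) ≠ x i c then 1 else 0 with hv
  have huv : ∀ i c, u i c + v i c = 1 := by
    intro i c
    rcases zmod2_cases (x i c) with h | h <;> simp [hu, hv, h]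
  set A : Fin n → ℕ := fun c => ∑ i, u i c with hA
  set B : Fin n → ℕ := fun c => ∑ i, v i c with hB
  have hABsum : ∀ c, A c + B c = m + 1 := by
    intro c
    rw [hA, hB]
    simp only
    rw [← Finset.sum_add_distrib]
    simp [huv]
  have hxeq : inertia x = ∑ c, min (A c) (B c) := inertia_eq x
  have hdel : ∀ i : Fin (m + 1), inertia (fun j : Fin m => x (i.succAbove j))
      = ∑ c, min (A c - u i c) (B c - v i c) := by
    intro i
    rw [inertia_eq]
    refine Finset.sum_congr rfl fun c _ => ?_
    have h1 : (∑ j : Fin m, if (0 : ZMod 2) ≠ x (i.succAbove j) c then 1 else 0)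
        = A c - u i c := by
      have := Fin.sum_univ_succAbove (fun i' => u i' c) i
      rw [hA]; simp only [hu] at this ⊢; omega
    have h2 : (∑ j : Fin m, if (1 : ZMod 2) ≠ x (i.succAbove j) c then 1 else 0)
        = B c - v i c := by
      have := Fin.sum_univ_succAbove (fun i' => v i' c) i
      rw [hB]; simp only [hv] at this ⊢; omega
    rw [h1, h2]
  simp_rw [hdel, hxeq]
  rw [Finset.sum_comm, Finset.mul_sum, Finset.mul_sum]
  apply Finset.sum_le_sum
  intro c _
  have hsum : (∑ i, min (A c - u i c) (B c - v i c))
      = A c * min (A c - 1) (B c) + B c * min (A c) (B c - 1) := by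
    have : ∀ i, min (A c - u i c) (B c - v i c)
        = u i c * min (A c - 1) (B c) + v i c * min (A c) (B c - 1) := by
      intro i
      have h1 : u i c ≤ A c := Finset.single_le_sum (f := fun i' => u i' c)
        (fun _ _ => Nat.zero_le _) (Finset.mem_univ i)
      have h2 : v i c ≤ B c := Finset.single_le_sum (f := fun i' => v i' c)
        (fun _ _ => Nat.zero_le _) (Finset.mem_univ i)
      have h3 := huv i c
      rcases Nat.le_one_iff_eq_zero_or_eq_one.mp (by omega : u i c ≤ 1) with h4 | h4
      · have h5 : v i c = 1 := by omega
        rw [h4, h5]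
        simp
      · have h5 : v i c = 0 := by omega
        rw [h4, h5]
        simp
    simp_rw [this]
    rw [Finset.sum_add_distrib, ← Finset.sum_mul, ← Finset.sum_mul]
  rw [hsum]
  exact key m (A c) (B c) (hABsum c)
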